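/- arXiv:1212.2553 — 2 statements merged into one kernel-verified Lean document; each statement's English description precedes it below -/
import Mathlib

section
/- Non-uniqueness of spectral-sequence decompositions: In the ring of Laurent polynomials in two commuting variables t and q over ℤ, the element P(t,q) = 1 + q² + q⁴ + q⁶ + t·q¹² admits decompositions of the form P(t,q) = q^{-2s}(q⁻² + 1 + q²) + Σ_{k≥1} ζ_k(t,q)·(1 + t·q^{3k}), where the ζ_k are Laurent polynomials in t and q with nonnegative integer coefficients, all but finitely many zero, for two distinct values of the integer s: namely s = -1 (with ζ₂ = q⁶ and all other ζ_k = 0) and s = -2 (with ζ₄ = 1 and all other ζ_k = 0). In particular, the value of s in such a decomposition is not uniquely determined by P. -/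
/-- The ring of Laurent polynomials in two commuting variables `t` and `q` over `ℤ`,
realised as the monoid algebra of `ℤ × ℤ` over `ℤ`. -/
noncomputable abbrev LaurentTQ : Type := AddMonoidAlgebra ℤ (ℤ × ℤ)

/-- The monomial `tⁱ · qʲ`. -/
noncomputable def tq (i j : ℤ) : LaurentTQ := AddMonoidAlgebra.single (i, j) 1

/-- `ζ` has nonnegative integer coefficients. -/
def NonnegCoeffs (ζ : LaurentTQ) : Prop := ∀ m : ℤ × ℤ, 0 ≤ ζ.coeff m

/-- `IsSpectralDecomp P s ζ` says that
`P = q^{-2s}·(q⁻² + 1 + q²) + Σ_{k ≥ 1} ζ k · (1 + t·q^{3k})`,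
where each `ζ k` is a Laurent polynomial with nonnegative coefficients and all but
finitely many of the `ζ k` vanish (`ζ 0` is irrelevant and required to be `0`). -/
def IsSpectralDecomp (P : LaurentTQ) (s : ℤ) (ζ : ℕ → LaurentTQ) : Prop :=
  (∀ k : ℕ, NonnegCoeffs (ζ k)) ∧
  ζ 0 = 0 ∧
  {k : ℕ | ζ k ≠ 0}.Finite ∧
  P = tq 0 (-2 * s) * (tq 0 (-2) + 1 + tq 0 2) +
      ∑ᶠ k : ℕ, ζ k * (1 + tq 1 (3 * (k : ℤ)))

lemma tq_mul (i j a b : ℤ) : tq i j * tq a b = tq (i+a) (j+b) := by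
  simp [tq, AddMonoidAlgebra.single_mul_single, Prod.mk_add_mk]

lemma tq_zero : tq 0 0 = 1 := rfl

lemma tq_nonneg (i j : ℤ) (m : ℤ × ℤ) : 0 ≤ (tq i j).coeff m := by
  simp [tq, AddMonoidAlgebra.coeff_single, Finsupp.single_apply]
  split <;> simp

/-- **Non-uniqueness of spectral-sequence decompositions.**
The Laurent polynomial `P(t,q) = 1 + q² + q⁴ + q⁶ + t·q¹²` admits decompositions of the
form `P = q^{-2s}(q⁻² + 1 + q²) + Σ_{k ≥ 1} ζ_k·(1 + t·q^{3k})` (with the `ζ_k` having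
nonnegative coefficients, all but finitely many zero) for two distinct values of the
integer `s`: namely `s = -1` (with `ζ₂ = q⁶` and all other `ζ_k = 0`) and `s = -2`
(with `ζ₄ = 1` and all other `ζ_k = 0`). In particular, `s` is not determined by `P`. -/
theorem spectral_decomposition_not_unique :
    ∃ ζ ζ' : ℕ → LaurentTQ,
      IsSpectralDecomp (1 + tq 0 2 + tq 0 4 + tq 0 6 + tq 1 12) (-1) ζ ∧
      IsSpectralDecomp (1 + tq 0 2 + tq 0 4 + tq 0 6 + tq 1 12) (-2) ζ' ∧
      ζ 2 = tq 0 6 ∧ (∀ k : ℕ, k ≠ 2 → ζ k = 0) ∧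
      ζ' 4 = 1 ∧ (∀ k : ℕ, k ≠ 4 → ζ' k = 0) ∧
      (-1 : ℤ) ≠ (-2 : ℤ) := by
  refine ⟨fun k => if k = 2 then tq 0 6 else 0,
          fun k => if k = 4 then 1 else 0, ?_, ?_, by simp, ?_, by simp, ?_, by decide⟩
  · refine ⟨?_, by simp, ?_, ?_⟩
    · intro k m
      by_cases h : k = 2 <;> simp [h, tq_nonneg]
    · exact Set.Finite.subset (Set.finite_singleton 2) (by intro k; simp; tauto)
    · rw [finsum_eq_single _ 2 (by intro k hk; simp [hk])]
      norm_num [mul_add, mul_one, tq_mul, tq_zero]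
      ring
  · refine ⟨?_, by simp, ?_, ?_⟩
    · intro k m
      by_cases h : k = 4
      · simp only [h, if_pos]
        simpa [tq_zero] using tq_nonneg 0 0 m
      · simp [h]
    · exact Set.Finite.subset (Set.finite_singleton 4)
        (by intro k hk; by_cases h : k = 4 <;> simp [h] at hk ⊢)
    · rw [finsum_eq_single _ 4 (by intro k hk; simp [hk])]
      norm_num [mul_add, mul_one, tq_mul, tq_zero]
      ring
  · intro k hk; simp [hk]
  · intro k hk; simp [hk]
end

section
/- Uniqueness of the decomposition when only the first page contributes: Let s, s' be integers and let ζ, ζ' be Laurent polynomials in two commuting variables t and q over ℤ. If q^{-2s}(q⁻² + 1 + q²) + ζ(t,q)·(1 + t·q³) = q^{-2s'}(q⁻² + 1 + q²) + ζ'(t,q)·(1 + t·q³) in the ring of Laurent polynomials in t and q over ℤ, then s = s' and ζ = ζ'. -/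
open LaurentPolynomial in
/-- The substitution `t ↦ -q⁻³`, as a monoid hom into one-variable Laurent polynomials. -/
noncomputable def fhom : Multiplicative (ℤ × ℤ) →* LaurentPolynomial ℤ where
  toFun p := (((-1 : (LaurentPolynomial ℤ)ˣ) ^ p.toAdd.1 : (LaurentPolynomial ℤ)ˣ) : LaurentPolynomial ℤ)
    * T (p.toAdd.2 - 3 * p.toAdd.1)
  map_one' := by simp
  map_mul' p q := by
    simp only [toAdd_mul, Prod.fst_add, Prod.snd_add, zpow_add, Units.val_mul]
    rw [show (p.toAdd.2 + q.toAdd.2) - 3 * (p.toAdd.1 + q.toAdd.1)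
        = (p.toAdd.2 - 3 * p.toAdd.1) + (q.toAdd.2 - 3 * q.toAdd.1) by ring, T_add]
    ring

noncomputable def phi : LaurentTQ →ₐ[ℤ] LaurentPolynomial ℤ :=
  AddMonoidAlgebra.lift ℤ (LaurentPolynomial ℤ) (ℤ × ℤ) fhom

open LaurentPolynomial in
lemma phi_tq (i j : ℤ) : phi (tq i j) =
    (((-1 : (LaurentPolynomial ℤ)ˣ) ^ i : (LaurentPolynomial ℤ)ˣ) : LaurentPolynomial ℤ)
    * T (j - 3 * i) := by
  simp [phi, tq, AddMonoidAlgebra.lift_single, fhom]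

open LaurentPolynomial in
lemma phi_tq0 (j : ℤ) : phi (tq 0 j) = T j := by
  simp [phi_tq]

lemma phi_t13 : phi (tq 1 3) = -1 := by
  rw [phi_tq]
  norm_num

open LaurentPolynomial in
lemma Aneq : (T (-2) + 1 + T 2 : LaurentPolynomial ℤ) ≠ 0 := by
  intro h0
  have h0' : ((Finsupp.single (-2:ℤ) (1:ℤ)) + Finsupp.single 0 1 + Finsupp.single 2 1 : ℤ →₀ ℤ) = 0 := congrArg AddMonoidAlgebra.coeff h0
  have := DFunLike.congr_fun h0' (2 : ℤ)
  simp only [Finsupp.add_apply, Finsupp.single_apply, Finsupp.coe_zero, Pi.zero_apply] at this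
  norm_num at this

lemma Bneq : (1 + tq 1 3 : LaurentTQ) ≠ 0 := by
  intro h0
  have h0' : ((Finsupp.single ((0,0) : ℤ × ℤ) (1:ℤ)) + Finsupp.single (1,3) 1 : (ℤ × ℤ) →₀ ℤ) = 0 := congrArg AddMonoidAlgebra.coeff h0
  have := DFunLike.congr_fun h0' ((0, 0) : ℤ × ℤ)
  simp only [Finsupp.add_apply, Finsupp.single_apply, Finsupp.coe_zero, Pi.zero_apply] at this
  norm_num at this

open LaurentPolynomial in
lemma T_inj {m n : ℤ} (h : (T m : LaurentPolynomial ℤ) = T n) : m = n := by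
  have h0' : (Finsupp.single m (1:ℤ) : ℤ →₀ ℤ) = Finsupp.single n 1 := congrArg AddMonoidAlgebra.coeff h
  by_contra hne
  have := DFunLike.congr_fun h0' m
  rw [Finsupp.single_apply, Finsupp.single_apply, if_pos rfl,
    if_neg (fun he : n = m => hne he.symm)] at this
  exact one_ne_zero this

/-- **Uniqueness of the decomposition when only the first page contributes.**
If `s, s'` are integers and `ζ, ζ'` are Laurent polynomials in `t` and `q` over `ℤ` with
`q^{-2s}(q⁻² + 1 + q²) + ζ·(1 + t·q³) = q^{-2s'}(q⁻² + 1 + q²) + ζ'·(1 + t·q³)`,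
then `s = s'` and `ζ = ζ'`. -/
theorem spectral_decomposition_unique_first_page
    (s s' : ℤ) (ζ ζ' : LaurentTQ)
    (h : tq 0 (-2 * s) * (tq 0 (-2) + 1 + tq 0 2) + ζ * (1 + tq 1 3) =
         tq 0 (-2 * s') * (tq 0 (-2) + 1 + tq 0 2) + ζ' * (1 + tq 1 3)) :
    s = s' ∧ ζ = ζ' := by
  have h1 := congrArg phi h
  simp only [map_add, map_mul, map_one, phi_tq0, phi_t13, add_neg_cancel, mul_zero,
    add_zero] at h1
  have hss : s = s' := by
    have h2 : LaurentPolynomial.T (-2 * s) = LaurentPolynomial.T (-2 * s') :=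
      mul_right_cancel₀ Aneq h1
    have := T_inj h2
    omega
  refine ⟨hss, ?_⟩
  subst hss
  exact mul_right_cancel₀ Bneq (add_left_cancel h)
end
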